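/- Let n ≥ 1, ρ ∈ [0,1], 0 < p₀ < 1, p₁ ∈ [0,1], set λ := (p₁ − p₀)/√(p₀(1−p₀)), and let S be a simple graph with vertex set V(S) ⊆ [n], edge set E(S), and no isolated vertices. Then, for Y distributed according to the planted dense subgraph measure P_{p₀, p₁, ρ, n}: E[∏_{(i,j) ∈ E(S)} (Y_{ij} − p₀)/√(p₀(1−p₀))] = λ^{|E(S)|} · ρ^{|V(S)|}. -/

import Mathlib

open MeasureTheory ProbabilityTheory Filter
open scoped ENNReal NNReal

/-- The degree-`D` advantage between two measures on a finite-dimensional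
real coordinate space. -/
noncomputable def Adv {ι : Type} [Fintype ι] (P Q : Measure (ι → ℝ)) (D : ℕ) : ℝ :=
  sSup {r : ℝ | ∃ f : MvPolynomial ι ℝ, f.totalDegree ≤ D ∧
    0 < ∫ x, (MvPolynomial.eval x f) ^ 2 ∂Q ∧
    r = (∫ x, MvPolynomial.eval x f ∂P) / Real.sqrt (∫ x, (MvPolynomial.eval x f) ^ 2 ∂Q)}

/-- Bernoulli(p) law on ℝ (mass p at 1, mass 1-p at 0). -/
noncomputable def bernoulliReal (p : ℝ) : Measure ℝ :=
  ENNReal.ofReal p • Measure.dirac 1 + ENNReal.ofReal (1 - p) • Measure.dirac 0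

/-- Index set of unordered pairs `{i,j} ⊆ [n]`, encoded as pairs `(i,j)` with `i < j`. -/
abbrev PairIdx (n : ℕ) := {p : Fin n × Fin n // p.1 < p.2}

/-- The Erdős–Rényi law `Q_{p₀,n}`: i.i.d. Bernoulli(p₀) entries. -/
noncomputable def erdosRenyi (p : ℝ) (n : ℕ) : Measure (PairIdx n → ℝ) :=
  Measure.pi fun _ => bernoulliReal p

/-- The planted dense subgraph measure `P_{p₀,p₁,ρ,n}`: draw `θ` with i.i.d. Bernoulli(ρ)
entries, then conditionally independent edges `Y_{ij} ∼ Bernoulli(p₀ + (p₁-p₀)θ_i θ_j)`. -/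
noncomputable def plantedDense (p0 p1 ρ : ℝ) (n : ℕ) : Measure (PairIdx n → ℝ) :=
  (Measure.pi fun _ : Fin n => bernoulliReal ρ).bind
    (fun θ => Measure.pi fun e => bernoulliReal (p0 + (p1 - p0) * θ e.1.1 * θ e.1.2))

/-- expectation of the centered edge product under the planted dense
subgraph measure: it equals `λ^{|E(S)|} ρ^{|V(S)|}` where `λ = (p₁-p₀)/√(p₀(1-p₀))`,
for any simple graph `S` (with vertex set `VS ⊆ [n]` and edge set `ES`) having
no isolated vertices. -/
instance (p : ℝ) : IsFiniteMeasure (bernoulliReal p) := by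
  constructor
  simp [bernoulliReal, Measure.add_apply, Measure.smul_apply]



/-- Algebraic sum-product exchange over Boolean configurations. -/
lemma sum_prod_bool {ι : Type*} [Fintype ι] [DecidableEq ι] {R : Type*} [CommSemiring R] (w : ι → Bool → R) :
    ∑ η : ι → Bool, ∏ i, w i (η i) = ∏ i, (w i true + w i false) := by
  have := Finset.prod_univ_sum (fun _ : ι => (Finset.univ : Finset Bool)) w
  rw [Fintype.piFinset_univ] at this
  rw [← this]
  exact Finset.prod_congr rfl fun i _ => by rw [Fintype.sum_bool]

lemma pi_bernoulli_eq {ι : Type*} [Fintype ι] [DecidableEq ι] (q : ι → ℝ) :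
    (Measure.pi fun i => bernoulliReal (q i)) =
      ∑ η : ι → Bool,
        (∏ i, ENNReal.ofReal (if η i then q i else 1 - q i)) •
          Measure.dirac (fun i => if η i then (1:ℝ) else 0) := by
  classical
  refine Measure.pi_eq fun s hs => ?_
  rw [Measure.finset_sum_apply]
  have hbox : MeasurableSet (Set.pi Set.univ s) := MeasurableSet.univ_pi hs
  have : ∀ η : ι → Bool,
      (((∏ i, ENNReal.ofReal (if η i then q i else 1 - q i)) •
        Measure.dirac (fun i => if η i then (1:ℝ) else 0)) (Set.pi Set.univ s))
      = ∏ i, (ENNReal.ofReal (if η i then q i else 1 - q i) *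
          (if (if η i then (1:ℝ) else 0) ∈ s i then 1 else 0)) := by
    intro η
    rw [Measure.smul_apply, Measure.dirac_apply' _ hbox, smul_eq_mul,
      Finset.prod_mul_distrib]
    congr 1
    rw [Set.indicator_apply, Set.mem_univ_pi, Finset.prod_boole]
    simp
  simp_rw [this]
  rw [sum_prod_bool (w := fun i b => ENNReal.ofReal (if b then q i else 1 - q i) *
      if (if b then (1:ℝ) else 0) ∈ s i then 1 else 0)]
  refine Finset.prod_congr rfl fun i _ => ?_
  rw [bernoulliReal, Measure.add_apply, Measure.smul_apply, Measure.smul_apply,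
    Measure.dirac_apply' _ (hs i), Measure.dirac_apply' _ (hs i),
    Set.indicator_apply, Set.indicator_apply]
  simp only [if_true, if_false, smul_eq_mul, Pi.one_apply]
  by_cases h1 : (1:ℝ) ∈ s i <;> by_cases h0 : (0:ℝ) ∈ s i <;> simp [h1, h0]

lemma integral_sum_smul_dirac {ι α : Type*} [Fintype ι] [MeasurableSpace α]
    (c : ι → ℝ≥0∞) (hc : ∀ i, c i ≠ ∞) (x : ι → α) (f : α → ℝ) (hf : Measurable f) :
    ∫ a, f a ∂(∑ i, c i • Measure.dirac (x i)) = ∑ i, (c i).toReal * f (x i) := by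
  rw [integral_finset_sum_measure ?_]
  · refine Finset.sum_congr rfl fun i _ => ?_
    rw [integral_smul_measure, integral_dirac' _ _ hf.stronglyMeasurable, smul_eq_mul]
  · intro i _
    refine ⟨hf.aestronglyMeasurable, ?_⟩
    rw [HasFiniteIntegral, lintegral_smul_measure, lintegral_dirac' _ hf.enorm]
    exact ENNReal.mul_lt_top (hc i).lt_top (by finiteness)

lemma integral_pi_bernoulli {ι : Type*} [Fintype ι] [DecidableEq ι]
    (q : ι → ℝ) (hq0 : ∀ i, 0 ≤ q i) (hq1 : ∀ i, q i ≤ 1)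
    (g : ι → ℝ → ℝ) (hg : ∀ i, Measurable (g i)) :
    ∫ y, ∏ i, g i (y i) ∂(Measure.pi fun i => bernoulliReal (q i)) =
      ∏ i, (q i * g i 1 + (1 - q i) * g i 0) := by
  classical
  rw [pi_bernoulli_eq]
  have hm : Measurable fun y : ι → ℝ => ∏ i, g i (y i) :=
    Finset.measurable_prod _ fun i _ => (hg i).comp (measurable_pi_apply i)
  have hc : ∀ η : ι → Bool, (∏ i, ENNReal.ofReal (if η i then q i else 1 - q i)) ≠ ∞ :=
    fun η => ENNReal.prod_ne_top fun i _ => ENNReal.ofReal_ne_top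
  rw [integral_sum_smul_dirac _ hc _ _ hm]
  have key : ∀ η : ι → Bool,
      (∏ i, ENNReal.ofReal (if η i then q i else 1 - q i)).toReal *
        (∏ i, g i (if η i then (1:ℝ) else 0))
      = ∏ i, ((if η i then q i else 1 - q i) * g i (if η i then (1:ℝ) else 0)) := by
    intro η
    rw [ENNReal.toReal_prod, ← Finset.prod_mul_distrib]
    refine Finset.prod_congr rfl fun i _ => ?_
    congr 1
    rw [ENNReal.toReal_ofReal]
    by_cases h : η i <;> simp [h, hq0 i, hq1 i, sub_nonneg]
  simp_rw [key]
  rw [sum_prod_bool (w := fun i b => (if b then q i else 1 - q i) * g i (if b then (1:ℝ) else 0))]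
  simp

lemma kernelPDS_meas (p0 p1 : ℝ) (n : ℕ) :
    Measurable (fun θ : Fin n → ℝ =>
      Measure.pi fun e : PairIdx n =>
        bernoulliReal (p0 + (p1 - p0) * θ e.1.1 * θ e.1.2)) := by
  classical
  apply Measure.measurable_measure.mpr
  intro s hs
  simp_rw [pi_bernoulli_eq]
  simp_rw [Measure.finset_sum_apply, Measure.smul_apply, smul_eq_mul]
  refine Finset.measurable_sum _ fun ξ _ => Measurable.mul ?_ measurable_const
  refine Finset.measurable_prod _ fun e _ => ?_
  refine Measurable.ennreal_ofReal ?_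
  by_cases h : ξ e = true <;> simp [h] <;> fun_prop

lemma integrable_pi_bernoulli {ι : Type*} [Fintype ι] [DecidableEq ι]
    (q : ι → ℝ) (f : (ι → ℝ) → ℝ) (hf : Measurable f) :
    Integrable f (Measure.pi fun i => bernoulliReal (q i)) := by
  rw [pi_bernoulli_eq, integrable_finset_sum_measure]
  intro η _
  refine ⟨hf.aestronglyMeasurable, ?_⟩
  rw [HasFiniteIntegral, lintegral_smul_measure, lintegral_dirac' _ hf.enorm]
  exact ENNReal.mul_lt_top
    (ENNReal.prod_ne_top fun i _ => ENNReal.ofReal_ne_top).lt_top (by finiteness)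

lemma plantedDense_eq (p0 p1 ρ : ℝ) (n : ℕ) :
    plantedDense p0 p1 ρ n = ∑ η : Fin n → Bool,
      (∏ i, ENNReal.ofReal (if η i then ρ else 1 - ρ)) •
        (Measure.pi fun e : PairIdx n => bernoulliReal
          (p0 + (p1 - p0) * (if η e.1.1 then (1:ℝ) else 0) * (if η e.1.2 then (1:ℝ) else 0))) := by
  classical
  ext s hs
  rw [plantedDense, Measure.bind_apply hs (kernelPDS_meas p0 p1 n).aemeasurable,
    pi_bernoulli_eq (q := fun _ : Fin n => ρ), lintegral_finset_sum_measure,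
    Measure.finset_sum_apply]
  refine Finset.sum_congr rfl fun η _ => ?_
  have hms : Measurable fun θ : Fin n → ℝ =>
      (Measure.pi fun e : PairIdx n =>
        bernoulliReal (p0 + (p1 - p0) * θ e.1.1 * θ e.1.2)) s :=
    (Measure.measurable_coe hs).comp (kernelPDS_meas p0 p1 n)
  rw [lintegral_smul_measure, lintegral_dirac' _ hms, Measure.smul_apply, smul_eq_mul]

theorem statement10 (n : ℕ) (hn : 1 ≤ n) (ρ p0 p1 : ℝ)
    (hρ : ρ ∈ Set.Icc (0:ℝ) 1) (hp0 : 0 < p0) (hp0lt : p0 < 1) (hp1 : p1 ∈ Set.Icc (0:ℝ) 1)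
    (VS : Finset (Fin n)) (ES : Finset (PairIdx n))
    (hinc : ∀ e ∈ ES, e.1.1 ∈ VS ∧ e.1.2 ∈ VS)
    (hnoiso : ∀ v ∈ VS, ∃ e ∈ ES, v = e.1.1 ∨ v = e.1.2) :
    ∫ y, ∏ e ∈ ES, ((y e - p0) / Real.sqrt (p0 * (1 - p0))) ∂(plantedDense p0 p1 ρ n)
      = ((p1 - p0) / Real.sqrt (p0 * (1 - p0))) ^ ES.card * ρ ^ VS.card := by
  classical
  set c := Real.sqrt (p0 * (1 - p0)) with hcdef
  set lam := (p1 - p0) / c with hlamdef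
  set g : PairIdx n → ℝ → ℝ := fun e y => if e ∈ ES then (y - p0) / c else 1 with hgdef
  have hgmeas : ∀ e, Measurable (g e) := by
    intro e; by_cases h : e ∈ ES <;> simp only [hgdef, h, if_true, if_false] <;> fun_prop
  have hfmeas : Measurable fun y : PairIdx n → ℝ => ∏ e, g e (y e) :=
    Finset.measurable_prod _ fun e _ => (hgmeas e).comp (measurable_pi_apply e)
  have hfprod : ∀ y : PairIdx n → ℝ,
      ∏ e ∈ ES, ((y e - p0) / c) = ∏ e, g e (y e) := by
    intro y
    rw [show (∏ e, g e (y e)) = ∏ e ∈ ES, g e (y e) from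
      (Finset.prod_subset (Finset.subset_univ ES) fun e _ he => by
        simp [hgdef, he]).symm]
    exact Finset.prod_congr rfl fun e he => by simp [hgdef, he]
  simp_rw [hfprod]
  rw [plantedDense_eq, integral_finset_sum_measure (fun η _ =>
    (integrable_pi_bernoulli _ _ hfmeas).smul_measure
      (ENNReal.prod_ne_top fun i _ => ENNReal.ofReal_ne_top))]
  simp_rw [integral_smul_measure, smul_eq_mul]
  have key : ∀ η : Fin n → Bool,
      (∫ y, ∏ e, g e (y e) ∂(Measure.pi fun e : PairIdx n => bernoulliReal
        (p0 + (p1 - p0) * (if η e.1.1 then (1:ℝ) else 0) * (if η e.1.2 then (1:ℝ) else 0))))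
      = lam ^ ES.card * ∏ i, (if i ∈ VS then (if η i then (1:ℝ) else 0) else 1) := by
    intro η
    have hq0 : ∀ e : PairIdx n, 0 ≤ p0 + (p1 - p0) *
        (if η e.1.1 then (1:ℝ) else 0) * (if η e.1.2 then (1:ℝ) else 0) := by
      intro e
      by_cases h1 : η e.1.1 = true <;> by_cases h2 : η e.1.2 = true <;>
        simp [h1, h2] <;> nlinarith [hp1.1, hp1.2, hp0, hp0lt]
    have hq1 : ∀ e : PairIdx n, p0 + (p1 - p0) *
        (if η e.1.1 then (1:ℝ) else 0) * (if η e.1.2 then (1:ℝ) else 0) ≤ 1 := by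
      intro e
      by_cases h1 : η e.1.1 = true <;> by_cases h2 : η e.1.2 = true <;>
        simp [h1, h2] <;> nlinarith [hp1.1, hp1.2, hp0, hp0lt]
    rw [integral_pi_bernoulli _ hq0 hq1 g hgmeas]
    have hval : ∀ e : PairIdx n,
        (p0 + (p1 - p0) * (if η e.1.1 then (1:ℝ) else 0) * (if η e.1.2 then (1:ℝ) else 0))
            * g e 1 +
          (1 - (p0 + (p1 - p0) * (if η e.1.1 then (1:ℝ) else 0) *
            (if η e.1.2 then (1:ℝ) else 0))) * g e 0
        = if e ∈ ES then
            lam * ((if η e.1.1 then (1:ℝ) else 0) * (if η e.1.2 then (1:ℝ) else 0))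
          else 1 := by
      intro e
      by_cases h : e ∈ ES
      · simp only [hgdef, h, if_true, hlamdef]
        ring
      · simp only [hgdef, h, if_false]
        ring
    rw [Finset.prod_congr rfl fun e _ => hval e]
    rw [show (∏ e : PairIdx n, if e ∈ ES then
          lam * ((if η e.1.1 then (1:ℝ) else 0) * (if η e.1.2 then (1:ℝ) else 0)) else 1)
        = ∏ e ∈ ES,
            lam * ((if η e.1.1 then (1:ℝ) else 0) * (if η e.1.2 then (1:ℝ) else 0)) from by
      rw [← Finset.prod_subset (Finset.subset_univ ES) fun e _ he => if_neg he]
      exact Finset.prod_congr rfl fun e he => if_pos he]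
    rw [Finset.prod_mul_distrib, Finset.prod_const]
    congr 1
    by_cases hall : ∀ v ∈ VS, η v = true
    · rw [Finset.prod_eq_one fun e he => by
        rw [if_pos (hall _ (hinc e he).1), if_pos (hall _ (hinc e he).2), one_mul],
        Finset.prod_eq_one fun i _ => by
          by_cases hi : i ∈ VS
          · simp [hi, hall i hi]
          · simp [hi]]
    · push_neg at hall
      obtain ⟨v, hv, hvf⟩ := hall
      obtain ⟨e, he, hor⟩ := hnoiso v hv
      have h0 : (if η v then (1:ℝ) else 0) = 0 := by simp [hvf]
      have l0 : (∏ e ∈ ES,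
          ((if η e.1.1 then (1:ℝ) else 0) * (if η e.1.2 then (1:ℝ) else 0))) = 0 :=
        Finset.prod_eq_zero he (by rcases hor with h | h <;> rw [← h] <;> simp [h0])
      have r0 : (∏ i, (if i ∈ VS then (if η i then (1:ℝ) else 0) else 1)) = 0 :=
        Finset.prod_eq_zero (Finset.mem_univ v) (by simp [hv, h0])
      rw [l0, r0]
  simp_rw [key]
  have hw : ∀ (η : Fin n → Bool),
      (∏ i, ENNReal.ofReal (if η i then ρ else 1 - ρ)).toReal
        = ∏ i, (if η i then ρ else 1 - ρ) := by
    intro η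
    rw [ENNReal.toReal_prod]
    refine Finset.prod_congr rfl fun i _ => ?_
    by_cases h : η i = true <;> simp [h, ENNReal.toReal_ofReal, hρ.1, sub_nonneg.mpr hρ.2]
  calc ∑ η : Fin n → Bool,
        (∏ i, ENNReal.ofReal (if η i then ρ else 1 - ρ)).toReal *
          (lam ^ ES.card * ∏ i, (if i ∈ VS then (if η i then (1:ℝ) else 0) else 1))
      = lam ^ ES.card * ∑ η : Fin n → Bool,
          ∏ i, ((if η i then ρ else 1 - ρ) *
            (if i ∈ VS then (if η i then (1:ℝ) else 0) else 1)) := by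
        rw [Finset.mul_sum]
        refine Finset.sum_congr rfl fun η _ => ?_
        rw [hw η, Finset.prod_mul_distrib]
        ring
    _ = lam ^ ES.card * ∏ i : Fin n, (if i ∈ VS then ρ else 1) := by
        rw [sum_prod_bool (w := fun i b => (if b then ρ else 1 - ρ) *
          (if i ∈ VS then (if b then (1:ℝ) else 0) else 1))]
        congr 1
        refine Finset.prod_congr rfl fun i _ => ?_
        by_cases hi : i ∈ VS <;> simp [hi] <;> ring
    _ = lam ^ ES.card * ρ ^ VS.card := by
        congr 1
        rw [← Finset.prod_subset (Finset.subset_univ VS) fun i _ hi => if_neg hi,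
          Finset.prod_congr rfl fun i hi => if_pos hi, Finset.prod_const]
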